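/- For real β > 0 and integer m ≥ 0, Σ_{k=0}^∞ [C(β+k-1, k)]² · k! / Γ(k + 2β + m + 1/2) = Γ(m+1/2) / Γ(m + β + 1/2)², where C(β+k-1,k) = (β)_k/k! is the generalized binomial coefficient (here β = (n+α+1)/2, so 2β = n+α+1). -/

import Mathlib

open Real

/-- Pochhammer symbol `(a)_k = a(a+1)⋯(a+k-1)` for real `a`. -/
noncomputable def poch (a : ℝ) (k : ℕ) : ℝ := (ascPochhammer ℝ k).eval a

open Filter Topology Set MeasureTheory

lemma poch_zero (a : ℝ) : poch a 0 = 1 := by simp [poch]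
lemma poch_succ (a : ℝ) (k : ℕ) : poch a (k+1) = poch a k * (a + k) := by
  simp [poch, ascPochhammer_succ_eval]
lemma poch_pos {a : ℝ} (ha : 0 < a) (k : ℕ) : 0 < poch a k := ascPochhammer_pos k a ha

lemma Gamma_nat_add {a : ℝ} (ha : 0 < a) (k : ℕ) :
    Real.Gamma (k + a) = poch a k * Real.Gamma a := by
  induction k with
  | zero => simp [poch_zero]
  | succ n ih =>
    have h : ((n:ℝ)+1) + a = (n + a) + 1 := by ring
    rw [Nat.cast_succ, h, Real.Gamma_add_one (by positivity), ih, poch_succ]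
    ring

lemma summable_deriv_series (β : ℝ) (hβ : 0 < β) {r : ℝ} (hr0 : 0 < r) (hr : r < 1) :
    Summable (fun k : ℕ => poch β k / (k.factorial : ℝ) * (k * r ^ (k-1))) := by
  apply summable_of_ratio_test_tendsto_lt_one hr
  · filter_upwards [eventually_ge_atTop 1] with n hn
    have h1 : (0:ℝ) < n := by exact_mod_cast hn
    have hp := poch_pos hβ n
    have hf : (0:ℝ) < n.factorial := by positivity
    have : 0 < poch β n / (n.factorial : ℝ) * (n * r ^ (n-1)) := by positivity
    exact this.ne'
  · simp only [Nat.add_sub_cancel, Nat.cast_add, Nat.cast_one]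
    have key : (fun n : ℕ => ‖poch β (n+1) / ((n+1).factorial : ℝ) * ((n+1) * r ^ n)‖ /
        ‖poch β n / (n.factorial : ℝ) * (n * r ^ (n-1))‖)
        =ᶠ[atTop] fun n : ℕ => (1 + β * (n:ℝ)⁻¹) * r := by
      filter_upwards [eventually_ge_atTop 1] with n hn
      have h1 : (1:ℝ) ≤ n := by exact_mod_cast hn
      have h0 : (0:ℝ) < n := by linarith
      have hp := poch_pos hβ n
      have hp2 := poch_pos hβ (n+1)
      have hf : (0:ℝ) < n.factorial := by positivity
      have hppos : (0:ℝ) < r ^ (n-1) := by positivity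
      have hrn : r ^ n = r ^ (n-1) * r := by
        rw [← pow_succ]; congr 1; omega
      rw [Real.norm_of_nonneg (by positivity), Real.norm_of_nonneg (by positivity),
        poch_succ, Nat.factorial_succ, hrn]
      have hβn : (0:ℝ) < β + n := by positivity
      push_cast
      field_simp
      ring
    apply Tendsto.congr' key.symm
    have h1 : Tendsto (fun n : ℕ => (1 + β * (n:ℝ)⁻¹) * r) atTop (𝓝 ((1 + β * 0) * r)) := by
      exact (((tendsto_inv_atTop_nhds_zero_nat).const_mul β).const_add 1).mul_const r
    simpa using h1

lemma hasSum_binomial (β : ℝ) (hβ : 0 < β) {t : ℝ} (ht0 : 0 ≤ t) (ht : t < 1) :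
    HasSum (fun k : ℕ => poch β k / (k.factorial : ℝ) * t ^ k) ((1 - t) ^ (-β)) := by
  set c : ℕ → ℝ := fun k => poch β k / (k.factorial : ℝ) with hc
  set r : ℝ := (1 + t) / 2 with hrdef
  have hr0 : 0 < r := by simp only [hrdef]; linarith
  have htr : t < r := by simp only [hrdef]; linarith
  have hr1 : r < 1 := by simp only [hrdef]; linarith
  set s : Set ℝ := Ioo (-r) r with hsdef
  have hs : IsOpen s := isOpen_Ioo
  have h's : IsPreconnected s := (convex_Ioo _ _).isPreconnected
  set g : ℕ → ℝ → ℝ := fun k y => c k * y ^ k with hgdef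
  set g' : ℕ → ℝ → ℝ := fun k y => c k * (k * y ^ (k-1)) with hg'def
  set u : ℕ → ℝ := fun k => c k * (k * r ^ (k-1)) with hudef
  have hu : Summable u := summable_deriv_series β hβ hr0 hr1
  have hck : ∀ k, 0 < c k := fun k => by
    have := poch_pos hβ k
    have : (0:ℝ) < k.factorial := by positivity
    simp only [hc]; positivity
  have hg : ∀ k y, y ∈ s → HasDerivAt (g k) (g' k y) y := fun k y _ =>
    (hasDerivAt_pow k y).const_mul (c k)
  have hg' : ∀ k y, y ∈ s → ‖g' k y‖ ≤ u k := by
    intro k y hy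
    have hyr : |y| ≤ r := by
      rw [abs_le]; exact ⟨(hy.1).le, (hy.2).le⟩
    have : ‖g' k y‖ = c k * (k * |y| ^ (k-1)) := by
      rw [Real.norm_eq_abs, abs_mul, abs_mul, abs_of_pos (hck k), abs_pow,
        Nat.abs_cast]
    rw [this]
    have : |y| ^ (k-1) ≤ r ^ (k-1) := pow_le_pow_left₀ (abs_nonneg y) hyr _
    have hk0 : (0:ℝ) ≤ k := Nat.cast_nonneg k
    exact mul_le_mul_of_nonneg_left (mul_le_mul_of_nonneg_left this hk0) (hck k).le
  have hy₀ : (0:ℝ) ∈ s := by constructor <;> [linarith; linarith]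
  have hg0 : Summable fun k => g k 0 := by
    apply summable_of_ne_finset_zero (s := {0})
    intro k hk
    simp only [Finset.mem_singleton] at hk
    simp [hgdef, zero_pow hk]
  set G : ℝ → ℝ := fun y => ∑' k, g k y with hGdef
  have hGs : ∀ y ∈ s, Summable fun k => g k y := fun y hy =>
    summable_of_summable_hasDerivAt_of_isPreconnected hu hs h's hg hg' hy₀ hg0 hy
  have hG : ∀ y ∈ s, HasDerivAt G (∑' k, g' k y) y := fun y hy =>
    hasDerivAt_tsum_of_isPreconnected hu hs h's hg hg' hy₀ hg0 hy
  -- the ODE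
  have ode : ∀ y ∈ s, (1 - y) * (∑' k, g' k y) = β * G y := by
    intro y hy
    have hsum' : Summable fun k => g' k y :=
      Summable.of_norm_bounded hu (fun k => hg' k y hy)
    have h0 : g' 0 y = 0 := by simp [hg'def]
    have shift : (∑' k, g' k y) = ∑' k, g' (k+1) y := by
      rw [Summable.tsum_eq_zero_add hsum', h0, zero_add]
    have term_eq : ∀ k : ℕ, g' (k+1) y = β * g k y + y * g' k y := by
      intro k
      have hfac : ((k+1).factorial : ℝ) = (k+1) * k.factorial := by
        rw [Nat.factorial_succ]; push_cast; ring
      have hc1 : c (k+1) * (k+1) = c k * (β + k) := by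
        simp only [hc, poch_succ, hfac]
        have h1 : ((k:ℝ)+1) ≠ 0 := by positivity
        have h2 : ((k.factorial : ℝ)) ≠ 0 := by positivity
        field_simp
      have hyk : (k:ℝ) * y ^ k = y * (k * y ^ (k-1)) := by
        cases k with
        | zero => simp
        | succ n => rw [Nat.add_sub_cancel]; ring
      have hyk2 : y * (c k * ((k:ℝ) * y ^ (k-1))) = c k * ((k:ℝ) * y ^ k) := by
        rw [hyk]; ring
      simp only [hg'def, hgdef, Nat.add_sub_cancel]
      push_cast
      calc c (k+1) * (((k:ℝ)+1) * y ^ k) = (c (k+1) * ((k:ℝ)+1)) * y ^ k := by ring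
        _ = c k * (β + (k:ℝ)) * y ^ k := by rw [hc1]
        _ = β * (c k * y ^ k) + y * (c k * ((k:ℝ) * y ^ (k-1))) := by
            rw [hyk2]; ring
    have hsum1 : Summable fun k => β * g k y := (hGs y hy).mul_left β
    have hsum2 : Summable fun k => y * g' k y := hsum'.mul_left y
    have key : (∑' k, g' (k+1) y) = β * G y + y * ∑' k, g' k y := by
      rw [tsum_congr term_eq, Summable.tsum_add hsum1 hsum2, tsum_mul_left, tsum_mul_left]
    linear_combination shift.trans key
  rcases eq_or_lt_of_le ht0 with h0 | htpos
  · rw [← h0]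
    simp only [sub_zero, Real.one_rpow]
    have : ∀ k : ℕ, k ∉ ({0} : Finset ℕ) → c k * (0:ℝ) ^ k = 0 := by
      intro k hk
      simp only [Finset.mem_singleton] at hk
      simp [zero_pow hk]
    have h : HasSum (fun k => c k * (0:ℝ) ^ k) (∑ k ∈ ({0} : Finset ℕ), c k * (0:ℝ) ^ k) :=
      hasSum_sum_of_ne_finset_zero (s := ({0} : Finset ℕ)) this
    simpa [hc, poch] using h
  -- now 0 < t
  set H : ℝ → ℝ := fun y => (1 - y) ^ β * G y with hHdef
  have hsub : Icc (0:ℝ) t ⊆ s := by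
    intro y hy
    exact ⟨by linarith [hy.1], by linarith [hy.2]⟩
  have hHderiv : ∀ y ∈ Ico (0:ℝ) t, HasDerivAt H 0 y := by
    intro y hy
    have hys : y ∈ s := hsub ⟨hy.1, hy.2.le⟩
    have h1y : 0 < 1 - y := by
      have : y < 1 := lt_trans hy.2 ht
      linarith
    have hrpow : HasDerivAt (fun z : ℝ => (1 - z) ^ β) (β * (1-y)^(β-1) * (-1)) y := by
      have h1 : HasDerivAt (fun z : ℝ => 1 - z) (-1) y :=
        (hasDerivAt_id y).const_sub 1 |>.congr_deriv (by ring)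
      exact (Real.hasDerivAt_rpow_const (Or.inl h1y.ne')).comp y h1
    have hGd := hG y hys
    have := hrpow.mul hGd
    convert this using 1
    case e'_4 => rfl
    case e'_5 => rfl
    case e'_8 => rfl
    have hpow : (1-y)^(β-1) = (1 - y) ^ β / (1-y) := by
      rw [Real.rpow_sub h1y, Real.rpow_one]
    have hode := ode y hys
    rw [hpow]
    field_simp
    linear_combination (-(1-y)^β) * hode
  have hHcont : ContinuousOn H (Icc 0 t) := by
    intro y hy
    have hys : y ∈ s := hsub hy
    have h1y : 0 < 1 - y := by
      have h2 : y < r := hys.2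
      linarith
    have hrpow : ContinuousAt (fun z : ℝ => (1 - z) ^ β) y := by
      apply ContinuousAt.rpow_const (by fun_prop)
      exact Or.inl h1y.ne'
    exact ((hrpow.mul (hG y hys).continuousAt)).continuousWithinAt
  have hconst := constant_of_has_deriv_right_zero hHcont
    (fun y hy => (hHderiv y hy).hasDerivWithinAt) t (right_mem_Icc.mpr htpos.le)
  have hG0 : G 0 = 1 := by
    simp only [hGdef]
    rw [tsum_eq_single 0 (fun k hk => by simp [hgdef, zero_pow hk])]
    simp [hgdef, hc, poch]
  have hH0 : H 0 = 1 := by simp [hHdef, hG0]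
  have h1t : 0 < 1 - t := by linarith
  have hGt : G t = (1 - t) ^ (-β) := by
    have h1 : (1 - t) ^ β * G t = 1 := hconst.trans hH0
    have hb : (0:ℝ) < (1-t)^β := Real.rpow_pos_of_pos h1t β
    rw [Real.rpow_neg h1t.le]
    field_simp
    linarith [h1]
  have hts : t ∈ s := ⟨by linarith, htr⟩
  have hfin := (hGs t hts).hasSum
  have h2 : (∑' (b:ℕ), g b t) = (1 - t) ^ (-β) := hGt
  rw [h2] at hfin
  simpa [hgdef, hc] using hfin

lemma realBeta_integrable {a b : ℝ} (ha : 0 < a) (hb : 0 < b) :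
    IntegrableOn (fun t : ℝ => t ^ (a-1) * (1-t) ^ (b-1)) (Ioc 0 1) := by
  have hc : IntervalIntegrable (fun x : ℝ => (x:ℂ) ^ ((a:ℂ)-1) * (1-(x:ℂ)) ^ ((b:ℂ)-1))
      MeasureTheory.volume 0 1 := Complex.betaIntegral_convergent (by simpa using ha) (by simpa using hb)
  rw [intervalIntegrable_iff_integrableOn_Ioc_of_le zero_le_one] at hc
  have hre : IntegrableOn (fun x : ℝ => (((x:ℂ) ^ ((a:ℂ)-1) * (1-(x:ℂ)) ^ ((b:ℂ)-1)).re))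
      (Ioc 0 1) := hc.re
  apply hre.congr_fun ?_ measurableSet_Ioc
  intro x hx
  have hx0 : (0:ℝ) ≤ x := hx.1.le
  have hx1 : (0:ℝ) ≤ 1 - x := by linarith [hx.2]
  have h1 : ((x:ℝ):ℂ) ^ ((a:ℂ)-1) = ((x ^ (a-1) : ℝ) : ℂ) := by
    rw [Complex.ofReal_cpow hx0]; push_cast; ring_nf
  have h2 : (1-(x:ℂ)) ^ ((b:ℂ)-1) = (((1-x) ^ (b-1) : ℝ) : ℂ) := by
    rw [Complex.ofReal_cpow hx1]; push_cast; ring_nf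
  simp [h1, h2, ← Complex.ofReal_mul]

lemma realBeta_value {a b : ℝ} (ha : 0 < a) (hb : 0 < b) :
    ∫ t in Ioc (0:ℝ) 1, t ^ (a-1) * (1-t) ^ (b-1) =
      Real.Gamma a * Real.Gamma b / Real.Gamma (a+b) := by
  have key := Complex.Gamma_mul_Gamma_eq_betaIntegral
    (s := (a:ℂ)) (t := (b:ℂ)) (by simpa using ha) (by simpa using hb)
  have hBeta : Complex.betaIntegral a b =
      ((∫ t in Ioc (0:ℝ) 1, t ^ (a-1) * (1-t) ^ (b-1) : ℝ) : ℂ) := by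
    rw [Complex.betaIntegral, intervalIntegral.integral_of_le zero_le_one]
    refine Eq.trans ?_ (_root_.integral_ofReal (f := fun t => t ^ (a-1) * (1-t) ^ (b-1)))
    apply setIntegral_congr_fun measurableSet_Ioc
    intro x hx
    have hx0 : (0:ℝ) ≤ x := hx.1.le
    have hx1 : (0:ℝ) ≤ 1 - x := by linarith [hx.2]
    have h1 : ((x:ℝ):ℂ) ^ ((a:ℂ)-1) = ((x ^ (a-1) : ℝ) : ℂ) := by
      rw [Complex.ofReal_cpow hx0]; push_cast; ring_nf
    have h2 : (1-(x:ℂ)) ^ ((b:ℂ)-1) = (((1-x) ^ (b-1) : ℝ) : ℂ) := by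
      rw [Complex.ofReal_cpow hx1]; push_cast; ring_nf
    simp [h1, h2]
  rw [hBeta, ← Complex.ofReal_add, Complex.Gamma_ofReal, Complex.Gamma_ofReal,
    Complex.Gamma_ofReal, ← Complex.ofReal_mul, ← Complex.ofReal_mul] at key
  have key' : Real.Gamma a * Real.Gamma b =
      Real.Gamma (a+b) * ∫ t in Ioc (0:ℝ) 1, t ^ (a-1) * (1-t) ^ (b-1) := by
    exact_mod_cast key
  have hG : Real.Gamma (a+b) ≠ 0 := (Real.Gamma_pos_of_pos (by linarith)).ne'
  field_simp
  linarith [key']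

theorem gauss_sum_binom_sq (β : ℝ) (hβ : β > 0) (m : ℕ) :
    ∑' k : ℕ, (poch β k / (Nat.factorial k : ℝ))^2 * (Nat.factorial k : ℝ) /
        Real.Gamma (k + 2*β + m + 1/2) =
      Real.Gamma (m + 1/2) / (Real.Gamma (m + β + 1/2))^2 := by
  set A : ℝ := β + m + 1/2 with hA
  have hA0 : 0 < A := by positivity
  have hm0 : (0:ℝ) < (m:ℝ) + 1/2 := by positivity
  set c : ℕ → ℝ := fun k => poch β k / (k.factorial : ℝ) with hc
  have hck : ∀ k, 0 < c k := fun k => by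
    have h1 := poch_pos hβ k
    have h2 : (0:ℝ) < k.factorial := by positivity
    simp only [hc]; positivity
  set F : ℕ → ℝ → ℝ := fun k t => c k * (t ^ ((k:ℝ) + β - 1) * (1-t) ^ (A - 1)) with hF
  set S : ℝ → ℝ := fun t => t ^ (β - 1) * (1-t) ^ ((m:ℝ) + 1/2 - 1) with hS
  -- pointwise sum on Ioo 0 1
  have hptsum : ∀ t ∈ Ioo (0:ℝ) 1, HasSum (fun k => F k t) (S t) := by
    intro t ht
    obtain ⟨ht0, ht1⟩ := ht
    have h1t : 0 < 1 - t := by linarith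
    have hbin := (hasSum_binomial β hβ ht0.le ht1).mul_right (t ^ (β - 1) * (1-t) ^ (A - 1))
    have heq : ∀ k : ℕ, c k * t ^ k * (t ^ (β - 1) * (1-t) ^ (A - 1)) = F k t := by
      intro k
      have : (t:ℝ) ^ k * t ^ (β - 1) = t ^ ((k:ℝ) + β - 1) := by
        rw [← Real.rpow_natCast t k, ← Real.rpow_add ht0]
        ring_nf
      simp only [hF]
      rw [← this]; ring
    have hval : (1 - t) ^ (-β) * (t ^ (β - 1) * (1-t) ^ (A - 1)) = S t := by
      have : (1 - t) ^ (-β) * (1-t) ^ (A - 1) = (1-t) ^ ((m:ℝ) + 1/2 - 1) := by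
        rw [← Real.rpow_add h1t]
        congr 1
        simp only [hA]; ring
      simp only [hS]
      rw [← this]; ring
    rw [← hval]
    exact HasSum.congr_fun hbin (fun k => (heq k).symm)
  -- nonnegativity
  have hFnonneg : ∀ k, ∀ t ∈ Ioo (0:ℝ) 1, 0 ≤ F k t := by
    intro k t ht
    have h0 := (hck k).le
    have h1 : (0:ℝ) ≤ t := ht.1.le
    have h2 : (0:ℝ) ≤ 1 - t := by linarith [ht.2]
    simp only [hF]
    positivity
  have hSnonneg : ∀ t ∈ Ioo (0:ℝ) 1, 0 ≤ S t := by
    intro t ht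
    have h1 : (0:ℝ) ≤ t := ht.1.le
    have h2 : (0:ℝ) ≤ 1 - t := by linarith [ht.2]
    simp only [hS]
    positivity
  -- measurability
  have hFmeas : ∀ k, Measurable (F k) := by
    intro k
    simp only [hF]
    fun_prop
  -- integrability
  have hFint : ∀ k, IntegrableOn (F k) (Ioo 0 1) := by
    intro k
    have hk : (0:ℝ) < (k:ℝ) + β := by positivity
    exact ((realBeta_integrable hk hA0).mono_set Ioo_subset_Ioc_self).const_mul (c k)
  have hSint : IntegrableOn S (Ioo 0 1) :=
    (realBeta_integrable hβ hm0).mono_set Ioo_subset_Ioc_self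
  -- Tonelli
  have tonelli : ∫⁻ t in Ioo (0:ℝ) 1, ∑' k, ENNReal.ofReal (F k t) =
      ∑' k, ∫⁻ t in Ioo (0:ℝ) 1, ENNReal.ofReal (F k t) :=
    lintegral_tsum (fun k => ((hFmeas k).ennreal_ofReal).aemeasurable)
  -- value of LHS
  have hLHS : ∫⁻ t in Ioo (0:ℝ) 1, ∑' k, ENNReal.ofReal (F k t) =
      ENNReal.ofReal (Real.Gamma β * Real.Gamma ((m:ℝ)+1/2) / Real.Gamma (β + ((m:ℝ)+1/2))) := by
    have h1 : ∫⁻ t in Ioo (0:ℝ) 1, ∑' k, ENNReal.ofReal (F k t) =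
        ∫⁻ t in Ioo (0:ℝ) 1, ENNReal.ofReal (S t) := by
      apply setLIntegral_congr_fun measurableSet_Ioo
      intro t ht
      beta_reduce
      rw [← (hptsum t ht).tsum_eq,
        ← ENNReal.ofReal_tsum_of_nonneg (fun k => hFnonneg k t ht) (hptsum t ht).summable]
    rw [h1, ← ofReal_integral_eq_lintegral_ofReal hSint
      ((ae_restrict_iff' measurableSet_Ioo).2 (Filter.Eventually.of_forall hSnonneg))]
    congr 1
    rw [← MeasureTheory.integral_Ioc_eq_integral_Ioo]
    have := realBeta_value hβ hm0
    simp only [hS]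
    rw [this]
  -- value of each term
  have hterm : ∀ k, ∫⁻ t in Ioo (0:ℝ) 1, ENNReal.ofReal (F k t) =
      ENNReal.ofReal (c k * (Real.Gamma ((k:ℝ)+β) * Real.Gamma A / Real.Gamma (((k:ℝ)+β)+A))) := by
    intro k
    have hk : (0:ℝ) < (k:ℝ) + β := by positivity
    rw [← ofReal_integral_eq_lintegral_ofReal (hFint k)
      ((ae_restrict_iff' measurableSet_Ioo).2 (Filter.Eventually.of_forall (hFnonneg k)))]
    congr 1
    rw [← MeasureTheory.integral_Ioc_eq_integral_Ioo]
    simp only [hF]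
    rw [MeasureTheory.integral_const_mul, realBeta_value hk hA0]
  -- identify term with theorem summand
  set D : ℝ := Real.Gamma β * Real.Gamma A with hD
  have hGβ := Real.Gamma_pos_of_pos hβ
  have hGA := Real.Gamma_pos_of_pos hA0
  have hDpos : 0 < D := mul_pos hGβ hGA
  set T : ℕ → ℝ := fun k => (poch β k / (Nat.factorial k : ℝ))^2 * (Nat.factorial k : ℝ) /
      Real.Gamma (k + 2*β + m + 1/2) with hT
  have hargpos : ∀ k : ℕ, (0:ℝ) < (k:ℝ) + 2*β + m + 1/2 := fun k => by positivity
  have hGarg : ∀ k : ℕ, 0 < Real.Gamma ((k:ℝ) + 2*β + m + 1/2) :=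
    fun k => Real.Gamma_pos_of_pos (hargpos k)
  have hargA : ∀ k : ℕ, ((k:ℝ)+β)+A = (k:ℝ) + 2*β + m + 1/2 := fun k => by
    simp only [hA]; ring
  have hTpos : ∀ k, 0 < T k := by
    intro k
    have h1 := poch_pos hβ k
    have h2 : (0:ℝ) < k.factorial := by positivity
    have h3 := hGarg k
    simp only [hT]
    positivity
  have hIk : ∀ k, c k * (Real.Gamma ((k:ℝ)+β) * Real.Gamma A / Real.Gamma (((k:ℝ)+β)+A))
      = D * T k := by
    intro k
    have hg := Gamma_nat_add hβ k
    have hfk : (0:ℝ) < k.factorial := by positivity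
    have h3 := hGarg k
    simp only [hT, hc, hD]
    rw [hargA k, hg]
    field_simp
  -- key ENNReal identity
  have key : ∑' k, ENNReal.ofReal (D * T k) =
      ENNReal.ofReal (Real.Gamma β * Real.Gamma ((m:ℝ)+1/2) / Real.Gamma (β + ((m:ℝ)+1/2))) := by
    calc ∑' k, ENNReal.ofReal (D * T k)
        = ∑' k, ∫⁻ t in Ioo (0:ℝ) 1, ENNReal.ofReal (F k t) :=
          tsum_congr fun k => by rw [hterm k, hIk k]
      _ = ∫⁻ t in Ioo (0:ℝ) 1, ∑' k, ENNReal.ofReal (F k t) := tonelli.symm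
      _ = _ := hLHS
  have hne : ∑' k, ENNReal.ofReal (D * T k) ≠ ⊤ := by rw [key]; exact ENNReal.ofReal_ne_top
  have hDT_nonneg : ∀ k, 0 ≤ D * T k := fun k => (mul_pos hDpos (hTpos k)).le
  have hsummable : Summable (fun k => D * T k) := by
    have h := ENNReal.summable_toReal hne
    refine h.congr fun k => ?_
    rw [ENNReal.toReal_ofReal (hDT_nonneg k)]
  have hRnonneg : 0 ≤ Real.Gamma β * Real.Gamma ((m:ℝ)+1/2) / Real.Gamma (β + ((m:ℝ)+1/2)) := by
    have h1 := Real.Gamma_pos_of_pos hm0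
    have h2 : 0 < Real.Gamma (β + ((m:ℝ)+1/2)) := Real.Gamma_pos_of_pos (by positivity)
    positivity
  have htsum : D * ∑' k, T k =
      Real.Gamma β * Real.Gamma ((m:ℝ)+1/2) / Real.Gamma (β + ((m:ℝ)+1/2)) := by
    have h1 := ENNReal.ofReal_tsum_of_nonneg hDT_nonneg hsummable
    have h2 : ENNReal.ofReal (∑' k, D * T k) = ENNReal.ofReal
        (Real.Gamma β * Real.Gamma ((m:ℝ)+1/2) / Real.Gamma (β + ((m:ℝ)+1/2))) := by
      rw [h1, key]
    have h3 := (ENNReal.ofReal_eq_ofReal_iff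
      (tsum_nonneg (fun k => hDT_nonneg k)) hRnonneg).1 h2
    rw [← tsum_mul_left, h3]
  -- final algebra
  have hAeq : β + ((m:ℝ)+1/2) = A := by simp only [hA]; ring
  have hAeq2 : (m:ℝ) + β + 1/2 = A := by simp only [hA]; ring
  rw [hAeq] at htsum
  have hfinal : ∑' k, T k = Real.Gamma ((m:ℝ)+1/2) / (Real.Gamma A)^2 := by
    have hDne : D ≠ 0 := hDpos.ne'
    have hGAne : Real.Gamma A ≠ 0 := hGA.ne'
    have hGβne : Real.Gamma β ≠ 0 := hGβ.ne'
    have hX : (∑' k, T k) = (Real.Gamma β * Real.Gamma ((m:ℝ)+1/2) / Real.Gamma A) / D := by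
      rw [eq_div_iff hDne, mul_comm]
      exact htsum
    rw [hX, hD]
    field_simp
  rw [show Real.Gamma ((m:ℝ) + β + 1/2) = Real.Gamma A from by rw [hAeq2]]
  exact hfinal
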